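/- Let M be a monoid, A an M-semimodule, and f, f': M × M → A 2-cocycles. If f and f' are strongly cohomologous, then the Schreier extensions E_f and E_{f'} are congruent; explicitly, if f(x,y) = f'(x,y) + xg(y) − g(xy) + g(x) for some g: M → U(A) with g(1) = 0, then β(a,x) = (a + g(x), x) defines a monoid homomorphism B_f → B_{f'} such that (1_A, β, 1_M) is a morphism of extensions. -/

import Mathlib

universe u v

section SchreierSemimodule

/- Throughout, `M` is a (multiplicatively written) monoid and an `M`-semimodule is an
additively written abelian monoid `A` together with a `DistribMulAction` of `M` on `A`,
i.e. an action satisfying `x • (a + a') = x • a + x • a'`, `x • 0 = 0`,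
`(x * y) • a = x • (y • a)` and `1 • a = a`. -/

variable (M : Type u) (A : Type v) [Monoid M] [AddCommMonoid A] [DistribMulAction M A]

/-- `u` is a representative over `x ∈ M` for the sequence `A →^κ B →^σ M`:
`σ u = x` and every `b ∈ σ⁻¹(x)` can be written uniquely as `b = κ a + u`. -/
def IsRepOf {B : Type*} [AddMonoid B] (κ : A →+ B) (σ : B → M) (x : M) (u : B) : Prop :=
  σ u = x ∧ ∀ b : B, σ b = x → ∃! a : A, b = κ a + u

/-- A Schreier extension of the `M`-semimodule `A` by the monoid `M`:  a sequence
`A →^κ B →^σ M` of monoids (`σ` being a homomorphism from the additively written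
monoid `B` to the multiplicatively written monoid `M`) such that `κ` is injective,
`σ` is surjective, `κ(A) = σ⁻¹(1)`, every `x ∈ M` admits a representative, and
moreover `b + κ a = κ (σ b • a) + b` for all `a ∈ A`, `b ∈ B`. -/
structure SchreierExtension where
  /-- the middle monoid of the extension -/
  B : Type (max u v)
  [instB : AddMonoid B]
  κ : A →+ B
  σ : B → M
  sigma_zero : σ 0 = 1
  sigma_add : ∀ b₁ b₂ : B, σ (b₁ + b₂) = σ b₁ * σ b₂
  kappa_inj : Function.Injective κ
  sigma_surj : Function.Surjective σ
  range_eq : ∀ b : B, σ b = 1 ↔ b ∈ Set.range κ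
  rep_exists : ∀ x : M, ∃ u : B, IsRepOf M A κ σ x u
  compat : ∀ (a : A) (b : B), b + κ a = κ (σ b • a) + b

attribute [instance] SchreierExtension.instB

variable {M A}

/-- `u` is a representative of the Schreier extension `E` over `x`. -/
def SchreierExtension.IsRep (E : SchreierExtension M A) (x : M) (u : E.B) : Prop :=
  IsRepOf M A E.κ E.σ x u

variable {A' : Type v} [AddCommMonoid A'] [DistribMulAction M A']

/-- `(α, β, 1_M)` is a morphism of Schreier extensions from `E` to `E'`:  the two squares
commute and `β` carries representatives to representatives. -/
def IsSchreierHom (E : SchreierExtension M A) (E' : SchreierExtension M A')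
    (α : A →+ A') (β : E.B →+ E'.B) : Prop :=
  (∀ a : A, β (E.κ a) = E'.κ (α a)) ∧ (∀ b : E.B, E'.σ (β b) = E.σ b) ∧
    ∀ (x : M) (u : E.B), E.IsRep x u → E'.IsRep x (β u)

/-- Two Schreier extensions of the `M`-semimodule `A` by `M` are congruent if there is a
monoid homomorphism between the middle monoids which commutes with the inclusions and the
projections and carries representatives to representatives, i.e. a morphism of the form
`(1_A, β, 1_M)`. -/
def SchreierCongruent (E E' : SchreierExtension M A) : Prop :=
  ∃ β : E.B →+ E'.B, IsSchreierHom E E' (AddMonoidHom.id A) β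

end SchreierSemimodule


section Cocycles

variable (M : Type u) (A : Type v) [Monoid M] [AddCommMonoid A] [DistribMulAction M A]

/-- A (normalized) `2`-cocycle of the monoid `M` with coefficients in the `M`-semimodule
`A`: `f (x, 1) = 0 = f (1, y)` and `x • f (y, z) + f (x, y*z) = f (x*y, z) + f (x, y)`. -/
def IsCocycle (f : M → M → A) : Prop :=
  (∀ x : M, f x 1 = 0) ∧ (∀ y : M, f 1 y = 0) ∧
    ∀ x y z : M, x • f y z + f x (y * z) = f (x * y) z + f x y

/-- The type of (normalized) `2`-cocycles of `M` with coefficients in `A`. -/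
def Cocycle : Type (max u v) := {f : M → M → A // IsCocycle M A f}

/-- The zero `2`-cocycle. -/
def zeroCocycle : Cocycle M A :=
  ⟨fun _ _ => (0 : A), fun _ => rfl, fun _ => rfl, by intro x y z; simp⟩

/-- Two `2`-cocycles `f, f'` are strongly cohomologous if there is a function
`g : M → U(A)` into the group of invertible elements of `A` with `g 1 = 0` and
`f (x, y) = f' (x, y) + x • g y − g (x*y) + g x` for all `x, y ∈ M`. -/
def StronglyCohomologous (f f' : M → M → A) : Prop :=
  ∃ g : M → AddUnits A, g 1 = 0 ∧
    ∀ x y : M, f x y = f' x y + x • (g y : A) + ((-(g (x * y)) : AddUnits A) : A) + (g x : A)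

/-- Two `2`-cocycles `f, f'` are cohomologous if there are functions `g₁, g₂ : M → A` with
`g₁ 1 = 0 = g₂ 1` and
`f (x,y) + x • g₁ y + g₁ x + g₂ (x*y) = f' (x,y) + x • g₂ y + g₂ x + g₁ (x*y)`. -/
def Cohomologous (f f' : M → M → A) : Prop :=
  ∃ g₁ g₂ : M → A, g₁ 1 = 0 ∧ g₂ 1 = 0 ∧
    ∀ x y : M, f x y + x • g₁ y + g₁ x + g₂ (x * y)
      = f' x y + x • g₂ y + g₂ x + g₁ (x * y)

variable {M A}

/-- The underlying set `B_f = A × M` of the Schreier extension `E_f` associated with a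
`2`-cocycle `f`. -/
@[ext] structure Bf (f : Cocycle M A) where
  a : A
  x : M

namespace Bf

variable (f : Cocycle M A)

/-- The composition `(a₁, x) + (a₂, y) = (a₁ + x • a₂ + f (x, y), x * y)` on `B_f`. -/
protected def add (p q : Bf f) : Bf f := ⟨p.a + p.x • q.a + f.1 p.x q.x, p.x * q.x⟩

instance : Zero (Bf f) := ⟨⟨0, 1⟩⟩
instance : Add (Bf f) := ⟨Bf.add f⟩

instance : AddMonoid (Bf f) where
  nsmul := nsmulRec
  add_assoc p q r := by
    show (Bf.add f (Bf.add f p q) r) = Bf.add f p (Bf.add f q r)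
    unfold Bf.add
    have h := f.2.2.2 p.x q.x r.x
    simp only [Bf.mk.injEq]
    refine ⟨?_, mul_assoc _ _ _⟩
    calc p.a + p.x • q.a + f.1 p.x q.x + (p.x * q.x) • r.a + f.1 (p.x * q.x) r.x
        = p.a + p.x • q.a + p.x • (q.x • r.a) + (f.1 (p.x * q.x) r.x + f.1 p.x q.x) := by
          rw [mul_smul]; abel
      _ = p.a + p.x • q.a + p.x • (q.x • r.a) + (p.x • f.1 q.x r.x + f.1 p.x (q.x * r.x)) := by
          rw [h]
      _ = p.a + p.x • (q.a + q.x • r.a + f.1 q.x r.x) + f.1 p.x (q.x * r.x) := by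
          rw [smul_add, smul_add]; abel
  zero_add p := by
    show Bf.add f ⟨0, 1⟩ p = p
    unfold Bf.add
    cases p with
    | mk a x => simp [f.2.2.1 x]
  add_zero p := by
    show Bf.add f p ⟨0, 1⟩ = p
    unfold Bf.add
    cases p with
    | mk a x => simp [f.2.1 x]

theorem add_def (p q : Bf f) : p + q = ⟨p.a + p.x • q.a + f.1 p.x q.x, p.x * q.x⟩ := rfl

theorem zero_def : (0 : Bf f) = ⟨0, 1⟩ := rfl

end Bf

/-- The inclusion `κ_f : A → B_f`, `a ↦ (a, 1)`. -/
def kappaF (f : Cocycle M A) : A →+ Bf f where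
  toFun a := ⟨a, 1⟩
  map_zero' := rfl
  map_add' a b := by
    rw [Bf.add_def]
    simp [f.2.2.1]

/-- The projection `σ_f : B_f → M`, `(a, x) ↦ x`. -/
def sigmaF (f : Cocycle M A) : Bf f → M := fun p => p.x

end Cocycles

section ExtOfCocycle

variable {M : Type u} {A : Type v} [Monoid M] [AddCommMonoid A] [DistribMulAction M A]

/-- The Schreier extension `E_f : A →^{κ_f} B_f →^{σ_f} M` of the `M`-semimodule `A` by `M`
associated with a `2`-cocycle `f`. -/
def extOfCocycle (f : Cocycle M A) : SchreierExtension M A where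
  B := Bf f
  κ := kappaF f
  σ := sigmaF f
  sigma_zero := rfl
  sigma_add _ _ := rfl
  kappa_inj a b h := congrArg Bf.a h
  sigma_surj x := ⟨⟨0, x⟩, rfl⟩
  range_eq b := by
    constructor
    · intro h
      exact ⟨b.a, by cases b; cases h; rfl⟩
    · rintro ⟨a, rfl⟩
      rfl
  rep_exists x := by
    refine ⟨⟨0, x⟩, rfl, fun b hb => ⟨b.a, ?_, ?_⟩⟩
    · cases b with
      | mk a y =>
        have hx : y = x := hb
        subst hx
        show Bf.mk a y = kappaF f a + ⟨0, y⟩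
        rw [show kappaF f a = ⟨a, 1⟩ from rfl, Bf.add_def]
        simp [f.2.2.1]
    · intro a' ha'
      rw [show kappaF f a' = ⟨a', 1⟩ from rfl, Bf.add_def] at ha'
      have := congrArg Bf.a ha'
      simpa [f.2.2.1] using this.symm
  compat a b := by
    show b + kappaF f a = kappaF f (b.x • a) + b
    rw [show kappaF f a = ⟨a, 1⟩ from rfl, show kappaF f (b.x • a) = ⟨b.x • a, 1⟩ from rfl,
      Bf.add_def, Bf.add_def]
    simp [f.2.1, f.2.2.1, add_comm]

end ExtOfCocycle

section Semidirect

variable (M : Type u) (A : Type v) [Monoid M] [AddCommMonoid A] [DistribMulAction M A]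

/-- The underlying set `A × M` of the semidirect product `A ⋊ M`. -/
@[ext] structure SemidirectCarrier where
  a : A
  x : M

namespace SemidirectCarrier

variable {M A}

/-- The composition `(a₁, x) + (a₂, y) = (a₁ + x • a₂, x * y)` on `A ⋊ M`. -/
protected def add (p q : SemidirectCarrier M A) : SemidirectCarrier M A :=
  ⟨p.a + p.x • q.a, p.x * q.x⟩

instance : Zero (SemidirectCarrier M A) := ⟨⟨0, 1⟩⟩
instance : Add (SemidirectCarrier M A) := ⟨SemidirectCarrier.add⟩

instance : AddMonoid (SemidirectCarrier M A) where
  nsmul := nsmulRec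
  add_assoc p q r := by
    show SemidirectCarrier.add (SemidirectCarrier.add p q) r
      = SemidirectCarrier.add p (SemidirectCarrier.add q r)
    unfold SemidirectCarrier.add
    simp only [SemidirectCarrier.mk.injEq]
    exact ⟨by rw [smul_add, mul_smul]; abel, mul_assoc _ _ _⟩
  zero_add p := by
    show SemidirectCarrier.add ⟨0, 1⟩ p = p
    unfold SemidirectCarrier.add
    cases p with
    | mk a x => simp
  add_zero p := by
    show SemidirectCarrier.add p ⟨0, 1⟩ = p
    unfold SemidirectCarrier.add
    cases p with
    | mk a x => simp

theorem add_def (p q : SemidirectCarrier M A) : p + q = ⟨p.a + p.x • q.a, p.x * q.x⟩ := rfl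

end SemidirectCarrier

/-- The semidirect product extension `0 : A →^ι A ⋊ M →^π M`, with `ι a = (a, 1)` and
`π (a, x) = x`. -/
def semidirectExtension : SchreierExtension M A where
  B := SemidirectCarrier M A
  κ :=
    { toFun := fun a => ⟨a, 1⟩
      map_zero' := rfl
      map_add' := fun a b => by rw [SemidirectCarrier.add_def]; simp }
  σ := fun p => p.x
  sigma_zero := rfl
  sigma_add _ _ := rfl
  kappa_inj a b h := congrArg SemidirectCarrier.a h
  sigma_surj x := ⟨⟨0, x⟩, rfl⟩
  range_eq b := by
    constructor
    · intro h
      exact ⟨b.a, by cases b; cases h; rfl⟩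
    · rintro ⟨a, rfl⟩
      rfl
  rep_exists x := by
    refine ⟨⟨0, x⟩, rfl, fun b hb => ⟨b.a, ?_, ?_⟩⟩
    · cases b with
      | mk a y =>
        have hx : y = x := hb
        subst hx
        show SemidirectCarrier.mk a y = SemidirectCarrier.add ⟨a, 1⟩ ⟨0, y⟩
        unfold SemidirectCarrier.add
        simp
    · intro a' ha'
      have := congrArg SemidirectCarrier.a ha'
      simpa [SemidirectCarrier.add_def] using this.symm
  compat a b := by
    show SemidirectCarrier.add b ⟨a, 1⟩ = SemidirectCarrier.add ⟨b.x • a, 1⟩ b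
    unfold SemidirectCarrier.add
    simp [add_comm]

end Semidirect

attribute [reducible] Cocycle

/-- Let `M` be a monoid, `A` an `M`-semimodule, and `f, f' : M × M → A` `2`-cocycles.
If `f` and `f'` are strongly cohomologous, say
`f (x, y) = f' (x, y) + x • g y − g (x*y) + g x` for some `g : M → U(A)` with `g 1 = 0`,
then `β (a, x) = (a + g x, x)` defines a monoid homomorphism `B_f → B_{f'}` such that
`(1_A, β, 1_M)` is a morphism of extensions; in particular the Schreier extensions `E_f`
and `E_{f'}` are congruent. -/
theorem stronglyCohomologous_congruent {M : Type u} {A : Type v}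
    [Monoid M] [AddCommMonoid A] [DistribMulAction M A]
    (f f' : M → M → A) (hf : IsCocycle M A f) (hf' : IsCocycle M A f')
    (g : M → AddUnits A) (hg1 : g 1 = 0)
    (hsc : ∀ x y : M,
      f x y = f' x y + x • (g y : A) + ((-(g (x * y)) : AddUnits A) : A) + (g x : A)) :
    ∃ β : Bf (⟨f, hf⟩ : Cocycle M A) →+ Bf (⟨f', hf'⟩ : Cocycle M A),
      (∀ p : Bf (⟨f, hf⟩ : Cocycle M A), β p = ⟨p.a + (g p.x : A), p.x⟩) ∧
      IsSchreierHom (extOfCocycle ⟨f, hf⟩) (extOfCocycle ⟨f', hf'⟩) (AddMonoidHom.id A) β ∧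
      SchreierCongruent (extOfCocycle ⟨f, hf⟩) (extOfCocycle ⟨f', hf'⟩) := by
  set F : Cocycle M A := ⟨f, hf⟩
  set F' : Cocycle M A := ⟨f', hf'⟩
  set β : Bf F →+ Bf F' :=
    { toFun := fun p => ⟨p.a + (g p.x : A), p.x⟩
      map_zero' := by
        rw [Bf.zero_def, Bf.zero_def]
        simp [hg1]
      map_add' := fun p q => by
        rw [Bf.add_def, Bf.add_def]
        ext
        · show p.a + p.x • q.a + f p.x q.x + (g (p.x * q.x) : A)
            = p.a + (g p.x : A) + p.x • (q.a + (g q.x : A)) + f' p.x q.x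
          rw [hsc p.x q.x, smul_add]
          have hn : ((-(g (p.x * q.x)) : AddUnits A) : A) + (g (p.x * q.x) : A) = 0 :=
            AddUnits.neg_add _
          calc p.a + p.x • q.a +
                (f' p.x q.x + p.x • (g q.x : A) + ((-(g (p.x * q.x)) : AddUnits A) : A)
                  + (g p.x : A)) + (g (p.x * q.x) : A)
              = p.a + (g p.x : A) + (p.x • q.a + p.x • (g q.x : A)) + f' p.x q.x
                + (((-(g (p.x * q.x)) : AddUnits A) : A) + (g (p.x * q.x) : A)) := by
                abel
            _ = _ := by rw [hn]; abel
        · rfl } with hβdef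
  have hhom : IsSchreierHom (extOfCocycle F) (extOfCocycle F') (AddMonoidHom.id A) β := by
    refine ⟨fun a => ?_, fun b => rfl, fun x u hu => ?_⟩
    · show (⟨a + (g (1 : M) : A), 1⟩ : Bf F') = ⟨a, 1⟩
      simp [hg1]
    · obtain ⟨hσ, hrep⟩ := hu
      refine ⟨hσ, fun b hb => ?_⟩
      have hux : u.x = x := hσ
      have hbx : b.x = x := hb
      obtain ⟨a, ha, hauniq⟩ := hrep (⟨b.a + ((-(g x) : AddUnits A) : A), x⟩ : Bf F) rfl
      have ha2 : (⟨b.a + ((-(g x) : AddUnits A) : A), x⟩ : Bf F)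
          = Bf.add F ⟨a, 1⟩ u := ha
      have haa : b.a + ((-(g x) : AddUnits A) : A) = a + u.a := by
        have := congrArg Bf.a ha2
        unfold Bf.add at this
        simpa [F, hf.2.1] using this
      refine ⟨a, ?_, ?_⟩
      · show b = Bf.add F' ⟨a, 1⟩ ⟨u.a + (g u.x : A), u.x⟩
        refine Bf.ext ?_ ?_
        · show b.a = (Bf.add F' ⟨a, 1⟩ ⟨u.a + (g u.x : A), u.x⟩).a
          unfold Bf.add
          dsimp only
          simp only [F', one_smul, hf'.2.1, add_zero, hux]
          rw [← add_assoc, ← haa, add_assoc, AddUnits.neg_add, add_zero]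
        · show b.x = (Bf.add F' ⟨a, 1⟩ ⟨u.a + (g u.x : A), u.x⟩).x
          unfold Bf.add
          dsimp only
          rw [one_mul, hux, hbx]
      · intro a' ha'
        refine hauniq a' ?_
        have ha'2 : b = Bf.add F' ⟨a', 1⟩ ⟨u.a + (g u.x : A), u.x⟩ := ha'
        unfold Bf.add at ha'2
        have hba := congrArg Bf.a ha'2
        dsimp only at hba
        simp only [F', one_smul, hf'.2.1, add_zero, hux] at hba
        show (⟨b.a + ((-(g x) : AddUnits A) : A), x⟩ : Bf F) = Bf.add F ⟨a', 1⟩ u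
        refine Bf.ext ?_ ?_
        · show b.a + ((-(g x) : AddUnits A) : A) = (Bf.add F ⟨a', 1⟩ u).a
          unfold Bf.add
          dsimp only
          simp only [F, one_smul, hf.2.1, add_zero]
          rw [hba, add_assoc, add_assoc, AddUnits.add_neg, add_zero]
        · show x = (Bf.add F ⟨a', 1⟩ u).x
          unfold Bf.add
          dsimp only
          rw [one_mul, hux]
  exact ⟨β, fun p => rfl, hhom, ⟨β, hhom⟩⟩
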